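/- Let d₁ ≥ 1, let J be a finite index set, let Σ ∈ ℝ^{d₁×d₁} be a real symmetric matrix with entries σ_{qr}, and let B be a real array indexed by pairs in ([d₁]×J) × ([d₁]×J) with operator norm ‖B‖ as a linear map on ℝ^{[d₁]×J}. Define the array M indexed by J×J by m_{uv} = (1/d₁) Σ_{u₁,v₁=1}^{d₁} σ_{u₁ v₁} b_{(u₁,u),(v₁,v)}. Then the operator norm of M as a linear map on ℝ^J satisfies ‖M‖ ≤ ‖B‖ ‖Σ‖. -/

import Mathlib

/-- The ℓ²→ℓ² operator norm of a real matrix. -/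
noncomputable def opNorm {I : Type*} [Fintype I] [DecidableEq I] (A : Matrix I I ℝ) : ℝ :=
  ‖LinearMap.toContinuousLinearMap (Matrix.toEuclideanLin A)‖

open Matrix

lemma aux_bilin {I : Type*} [Fintype I] [DecidableEq I] (A : Matrix I I ℝ)
    (x y : EuclideanSpace ℝ I) :
    |∑ i, y i * (A *ᵥ ⇑x) i| ≤ opNorm A * ‖y‖ * ‖x‖ := by
  have h1 : ∑ i, y i * (A *ᵥ ⇑x) i = (inner ℝ y (Matrix.toEuclideanLin A x) : ℝ) := by
    rw [PiLp.inner_apply]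
    refine Finset.sum_congr rfl fun i _ => ?_
    rw [RCLike.inner_apply', conj_trivial]
    rfl
  rw [h1]
  calc |(inner ℝ y (Matrix.toEuclideanLin A x) : ℝ)| ≤ ‖y‖ * ‖Matrix.toEuclideanLin A x‖ :=
        abs_real_inner_le_norm _ _
    _ ≤ ‖y‖ * (opNorm A * ‖x‖) := by
        refine mul_le_mul_of_nonneg_left ?_ (norm_nonneg _)
        exact (LinearMap.toContinuousLinearMap (Matrix.toEuclideanLin A)).le_opNorm x
    _ = opNorm A * ‖y‖ * ‖x‖ := by ring

lemma aux_tensor {I J : Type*} [Fintype I] [Fintype J]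
    (a : EuclideanSpace ℝ I) (b : EuclideanSpace ℝ J) :
    ‖(show EuclideanSpace ℝ (I × J) from WithLp.toLp 2 fun p : I × J => a p.1 * b p.2)‖ = ‖a‖ * ‖b‖ := by
  rw [EuclideanSpace.norm_eq, EuclideanSpace.norm_eq, EuclideanSpace.norm_eq,
    ← Real.sqrt_mul (by positivity), Fintype.sum_prod_type, Finset.sum_mul_sum]
  congr 1
  refine Finset.sum_congr rfl fun i _ => Finset.sum_congr rfl fun j _ => ?_
  simp [Real.norm_eq_abs, mul_pow, abs_mul]

/-- partial contraction of an array `B` indexed by `([d₁]×J)²` against a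
symmetric matrix `Σ` (normalized by `1/d₁`) has operator norm at most `‖B‖ ‖Σ‖`. -/
theorem stmt_13 (d₁ : ℕ) (hd : 1 ≤ d₁) (J : Type*) [Fintype J] [DecidableEq J]
    (S : Matrix (Fin d₁) (Fin d₁) ℝ) (hS : S.IsSymm)
    (B : Matrix (Fin d₁ × J) (Fin d₁ × J) ℝ)
    (M : Matrix J J ℝ)
    (hM : ∀ u v, M u v = (d₁ : ℝ)⁻¹ * ∑ u₁, ∑ v₁, S u₁ v₁ * B (u₁, u) (v₁, v)) :
    opNorm M ≤ opNorm B * opNorm S := by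
  classical
  have hS' : S.IsHermitian := by
    rw [Matrix.IsHermitian, Matrix.conjTranspose_eq_transpose_of_trivial]; exact hS
  set ev : Fin d₁ → ℝ := hS'.eigenvalues with hev
  set w : Fin d₁ → EuclideanSpace ℝ (Fin d₁) := fun k => hS'.eigenvectorBasis k with hw
  -- norm one of eigenvectors
  have hwnorm : ∀ k, ‖w k‖ = 1 := fun k => hS'.eigenvectorBasis.orthonormal.1 k
  -- eigenvalue bound
  have hevle : ∀ k, |ev k| ≤ opNorm S := by
    intro k
    have h := hS'.mulVec_eigenvectorBasis k
    have h2 : Matrix.toEuclideanLin S (w k) = ev k • w k := by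
      apply PiLp.ext; intro i; exact congrFun h i
    have h3 : ‖Matrix.toEuclideanLin S (w k)‖ ≤ opNorm S * ‖w k‖ :=
      (LinearMap.toContinuousLinearMap (Matrix.toEuclideanLin S)).le_opNorm (w k)
    rw [h2, norm_smul, Real.norm_eq_abs, hwnorm k, mul_one, mul_one] at h3
    exact h3
  -- entrywise spectral theorem
  have hspec : ∀ a b : Fin d₁, S a b = ∑ k, ev k * (w k a * w k b) := by
    intro a b
    have h := hS'.spectral_theorem
    have h2 := congrFun (congrFun h a) b
    rw [Unitary.conjStarAlgAut_apply, Matrix.mul_assoc] at h2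
    rw [h2, Matrix.mul_apply]
    refine Finset.sum_congr rfl fun k _ => ?_
    rw [Matrix.diagonal_mul]
    simp only [Function.comp_apply, RCLike.ofReal_real_eq_id, id_eq, star_apply,
      Matrix.star_apply, star_trivial]
    rw [hS'.eigenvectorUnitary_apply, hS'.eigenvectorUnitary_apply]
    show w k a * (ev k * w k b) = ev k * (w k a * w k b)
    ring
  set C : ℝ := opNorm B * opNorm S with hC
  have hC0 : 0 ≤ C := mul_nonneg (norm_nonneg _) (norm_nonneg _)
  have hd0 : (0:ℝ) < (d₁ : ℝ) := by positivity
  -- the key bilinear-form bound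
  have hbound : ∀ x y : EuclideanSpace ℝ J, |∑ u, y u * (M *ᵥ x) u| ≤ C * (‖y‖ * ‖x‖) := by
    intro x y
    set Y : Fin d₁ → EuclideanSpace ℝ (Fin d₁ × J) :=
      fun k => (show EuclideanSpace ℝ (Fin d₁ × J) from WithLp.toLp 2 fun p : Fin d₁ × J => w k p.1 * y p.2) with hY
    set X : Fin d₁ → EuclideanSpace ℝ (Fin d₁ × J) :=
      fun k => (show EuclideanSpace ℝ (Fin d₁ × J) from WithLp.toLp 2 fun p : Fin d₁ × J => w k p.1 * x p.2) with hX
    have hYapp : ∀ k p, Y k p = w k p.1 * y p.2 := fun k p => rfl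
    have hXapp : ∀ k p, X k p = w k p.1 * x p.2 := fun k p => rfl
    have hYnorm : ∀ k, ‖Y k‖ = ‖y‖ := by
      intro k; rw [hY]; rw [aux_tensor (w k) y, hwnorm k, one_mul]
    have hXnorm : ∀ k, ‖X k‖ = ‖x‖ := by
      intro k; rw [hX]; rw [aux_tensor (w k) x, hwnorm k, one_mul]
    -- the two rewritings as sums over a product type
    have hL : ∑ u, y u * (M *ᵥ x) u
        = ∑ z : J × J × Fin d₁ × Fin d₁ × Fin d₁,
            (d₁:ℝ)⁻¹ * (ev z.2.2.2.2 *
              (w z.2.2.2.2 z.2.2.1 * w z.2.2.2.2 z.2.2.2.1 *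
                (y z.1 * x z.2.1 * B (z.2.2.1, z.1) (z.2.2.2.1, z.2.1)))) := by
      simp only [Matrix.mulVec, dotProduct, hM, hspec, Fintype.sum_prod_type,
        Finset.mul_sum, Finset.sum_mul]
      refine Finset.sum_congr rfl fun u _ => Finset.sum_congr rfl fun v _ =>
        Finset.sum_congr rfl fun u₁ _ => Finset.sum_congr rfl fun v₁ _ =>
        Finset.sum_congr rfl fun k _ => by ring
    have hR : ∑ k, ev k * ∑ p, Y k p * (B *ᵥ X k) p
        = ∑ z : Fin d₁ × (Fin d₁ × J) × (Fin d₁ × J),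
            ev z.1 * (w z.1 z.2.1.1 * y z.2.1.2 *
              (B z.2.1 z.2.2 * (w z.1 z.2.2.1 * x z.2.2.2))) := by
      simp only [Matrix.mulVec, dotProduct, Fintype.sum_prod_type,
        Finset.mul_sum, Finset.sum_mul, hYapp, hXapp]
    have hID : ∑ u, y u * (M *ᵥ x) u
        = (d₁:ℝ)⁻¹ * ∑ k, ev k * ∑ p, Y k p * (B *ᵥ X k) p := by
      rw [hL, hR, Finset.mul_sum]
      refine (Fintype.sum_equiv
        ⟨fun z => (z.2.1.2, z.2.2.2, z.2.1.1, z.2.2.1, z.1),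
         fun z => (z.2.2.2.2, (z.2.2.1, z.1), (z.2.2.2.1, z.2.1)),
         fun _ => rfl, fun _ => rfl⟩ _ _ fun z => ?_).symm
      rcases z with ⟨k, ⟨u₁, u⟩, ⟨v₁, v⟩⟩
      simp only [Equiv.coe_fn_mk]
      ring
    rw [hID]
    have hterm : ∀ k, |ev k * ∑ p, Y k p * (B *ᵥ X k) p| ≤ opNorm S * (opNorm B * (‖y‖ * ‖x‖)) := by
      intro k
      rw [abs_mul]
      have h1 := aux_bilin B (X k) (Y k)
      rw [hYnorm k, hXnorm k] at h1
      calc |ev k| * |∑ p, Y k p * (B *ᵥ X k) p|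
          ≤ opNorm S * (opNorm B * ‖y‖ * ‖x‖) :=
            mul_le_mul (hevle k) h1 (abs_nonneg _) (norm_nonneg _)
        _ = opNorm S * (opNorm B * (‖y‖ * ‖x‖)) := by ring
    calc |(d₁:ℝ)⁻¹ * ∑ k, ev k * ∑ p, Y k p * (B *ᵥ X k) p|
        = (d₁:ℝ)⁻¹ * |∑ k, ev k * ∑ p, Y k p * (B *ᵥ X k) p| := by
          rw [abs_mul, abs_of_nonneg (by positivity)]
      _ ≤ (d₁:ℝ)⁻¹ * ∑ k, |ev k * ∑ p, Y k p * (B *ᵥ X k) p| := by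
          refine mul_le_mul_of_nonneg_left (Finset.abs_sum_le_sum_abs _ _) (by positivity)
      _ ≤ (d₁:ℝ)⁻¹ * ∑ _k : Fin d₁, opNorm S * (opNorm B * (‖y‖ * ‖x‖)) := by
          refine mul_le_mul_of_nonneg_left (Finset.sum_le_sum fun k _ => hterm k) (by positivity)
      _ = C * (‖y‖ * ‖x‖) := by
          rw [Finset.sum_const, Finset.card_univ, Fintype.card_fin, nsmul_eq_mul, hC]
          field_simp
  -- conclude the operator-norm bound
  refine ContinuousLinearMap.opNorm_le_bound _ hC0 fun x => ?_
  set T := LinearMap.toContinuousLinearMap (Matrix.toEuclideanLin M) with hT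
  have hTx : ‖T x‖ * ‖T x‖ = ∑ u, (T x) u * (M *ᵥ x) u := by
    rw [← real_inner_self_eq_norm_mul_norm, PiLp.inner_apply]
    rfl
  have h2 : ‖T x‖ * ‖T x‖ ≤ C * (‖T x‖ * ‖x‖) := by
    rw [hTx]
    exact le_trans (le_abs_self _) (hbound x (T x))
  rcases (norm_nonneg (T x)).eq_or_lt' with h | h
  · rw [h]; positivity
  · have h3 : ‖T x‖ * ‖T x‖ ≤ C * ‖x‖ * ‖T x‖ := by nlinarith [h2]
    exact le_of_mul_le_mul_right h3 h
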